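/- Let D ⊆ R^n be compact convex, G strictly convex continuous on D with minimizer x* and minimum g*, and g > g*. Then the path-connected components of the level set S_g = {x : G(x) = g} are in bijection with the path-connected components of D \ U_g = {x : G(x) ≥ g}: each component σ of S_g is contained in exactly one component W of {G ≥ g}, and each component W of {G ≥ g} contains exactly one component of S_g, namely θ_g(W). -/

import Mathlib

open Set

lemma stmt17_mem {n : ℕ} {D : Set (Fin n → ℝ)} (hD : Convex ℝ D)
    {xstar x : Fin n → ℝ} (hxstar : xstar ∈ D) (hx : x ∈ D)
    {t : ℝ} (h0 : 0 ≤ t) (h1 : t ≤ 1) : xstar + t • (x - xstar) ∈ D := by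
  have h : xstar + t • (x - xstar) = (1 - t) • xstar + t • x := by module
  rw [h]
  exact hD hxstar hx (by linarith) h0 (by ring)

lemma stmt17_mono {n : ℕ} {D : Set (Fin n → ℝ)} {G : (Fin n → ℝ) → ℝ}
    (hD : Convex ℝ D) (hGcv : ConvexOn ℝ D G)
    {xstar : Fin n → ℝ} (hxstar : xstar ∈ D) (hmin : ∀ y ∈ D, G xstar ≤ G y)
    {x : Fin n → ℝ} (hx : x ∈ D)
    {s t : ℝ} (hs : 0 ≤ s) (hst : s ≤ t) (ht : t ≤ 1) :
    G (xstar + s • (x - xstar)) ≤ G (xstar + t • (x - xstar)) := by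
  rcases eq_or_lt_of_le (hs.trans hst) with h | htpos
  · have hs0 : s = 0 := le_antisymm (hst.trans h.symm.le) hs
    rw [hs0, ← h]
  · have hb : xstar + t • (x - xstar) ∈ D := stmt17_mem hD hxstar hx htpos.le ht
    have hl0 : 0 ≤ s / t := div_nonneg hs htpos.le
    have hl1 : s / t ≤ 1 := (div_le_one htpos).2 hst
    have ht0 : t ≠ 0 := htpos.ne'
    have key : xstar + s • (x - xstar) = (1 - s / t) • xstar + (s / t) • (xstar + t • (x - xstar)) := by
      match_scalars <;> field_simp <;> ring
    rw [key]
    have h1 := hGcv.2 hxstar hb (sub_nonneg.mpr hl1) hl0 (by ring)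
    have h2 := hmin _ hb
    simp only [smul_eq_mul] at h1
    nlinarith

lemma stmt17_smono {n : ℕ} {D : Set (Fin n → ℝ)} {G : (Fin n → ℝ) → ℝ}
    (hD : Convex ℝ D) (hG : StrictConvexOn ℝ D G)
    {xstar : Fin n → ℝ} (hxstar : xstar ∈ D) (hmin : ∀ y ∈ D, G xstar ≤ G y)
    {x : Fin n → ℝ} (hx : x ∈ D) (hxne : x ≠ xstar)
    {s t : ℝ} (hs : 0 < s) (hst : s < t) (ht : t ≤ 1) :
    G (xstar + s • (x - xstar)) < G (xstar + t • (x - xstar)) := by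
  have htpos : 0 < t := hs.trans hst
  have hb : xstar + t • (x - xstar) ∈ D := stmt17_mem hD hxstar hx htpos.le ht
  have hbne : xstar ≠ xstar + t • (x - xstar) := by
    intro h
    apply hxne
    have : t • (x - xstar) = 0 := by
      have := h.symm
      rwa [add_eq_left] at this
    have := smul_eq_zero.1 this
    rcases this with h' | h'
    · exact absurd h' htpos.ne'
    · exact sub_eq_zero.1 h'
  have hl0 : 0 < s / t := div_pos hs htpos
  have hl1 : s / t < 1 := (div_lt_one htpos).2 hst
  have ht0 : t ≠ 0 := htpos.ne'
  have key : xstar + s • (x - xstar) = (1 - s / t) • xstar + (s / t) • (xstar + t • (x - xstar)) := by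
    match_scalars <;> field_simp <;> ring
  rw [key]
  have h1 := hG.2 hxstar hb hbne (sub_pos.mpr hl1) hl0 (by ring)
  have h2 := hmin _ hb
  simp only [smul_eq_mul] at h1
  nlinarith

set_option maxHeartbeats 1600000

/-- For `g > g*`, the path-connected components of the level set
`S_g = {x ∈ D | G x = g}` are in bijection with those of `{x ∈ D | G x ≥ g}`:
each component of `S_g` lies in exactly one component of `{G ≥ g}`, and each
component of `{G ≥ g}` contains exactly one component of `S_g`. -/
theorem stmt_17 {n : ℕ} (D : Set (Fin n → ℝ)) (G : (Fin n → ℝ) → ℝ)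
    (hDc : IsCompact D) (hD : Convex ℝ D)
    (hGcont : ContinuousOn G D) (hG : StrictConvexOn ℝ D G)
    (xstar : Fin n → ℝ) (hxstar : xstar ∈ D) (hmin : ∀ y ∈ D, G xstar ≤ G y)
    (g : ℝ) (hg : G xstar < g) :
    (∀ y ∈ {x ∈ D | G x = g},
      pathComponentIn {x ∈ D | G x = g} y ⊆ pathComponentIn {x ∈ D | g ≤ G x} y) ∧
    (∀ x ∈ {x ∈ D | g ≤ G x},
      (∃ y ∈ {x ∈ D | G x = g}, y ∈ pathComponentIn {x ∈ D | g ≤ G x} x) ∧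
      ∀ y z, y ∈ {x ∈ D | G x = g} → z ∈ {x ∈ D | G x = g} →
        y ∈ pathComponentIn {x ∈ D | g ≤ G x} x →
        z ∈ pathComponentIn {x ∈ D | g ≤ G x} x →
        JoinedIn {x ∈ D | G x = g} y z) := by
  classical
  have hGcv : ConvexOn ℝ D G := hG.convexOn
  set S : Set (Fin n → ℝ) := {x ∈ D | G x = g} with hSdef
  set T : Set (Fin n → ℝ) := {x ∈ D | g ≤ G x} with hTdef
  have hST : S ⊆ T := fun x hx => ⟨hx.1, hx.2.ge⟩
  have hxne : ∀ x ∈ T, x ≠ xstar := by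
    intro x hx h
    have := hx.2
    rw [h] at this
    linarith
  -- existence of the level-crossing parameter
  have hex : ∀ x : Fin n → ℝ, ∃ t : ℝ, x ∈ T →
      (0 < t ∧ t ≤ 1) ∧ G (xstar + t • (x - xstar)) = g := by
    intro x
    by_cases hx : x ∈ T
    · obtain ⟨hxD, hxg⟩ := hx
      have hcont : ContinuousOn (fun t : ℝ => G (xstar + t • (x - xstar))) (Set.Icc 0 1) := by
        apply hGcont.comp
        · exact Continuous.continuousOn (by continuity)
        · intro t ht
          exact stmt17_mem hD hxstar hxD ht.1 ht.2
      have hiv := intermediate_value_Icc (zero_le_one) hcont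
      have hmem : g ∈ Set.Icc ((fun t : ℝ => G (xstar + t • (x - xstar))) 0)
          ((fun t : ℝ => G (xstar + t • (x - xstar))) 1) := by
        constructor
        · simpa using hg.le
        · simpa using hxg
      obtain ⟨t, ht01, hteq⟩ := hiv hmem
      refine ⟨t, fun _ => ⟨⟨?_, ht01.2⟩, hteq⟩⟩
      rcases ht01.1.eq_or_lt with h | h
      · exfalso
        rw [← h] at hteq
        simp at hteq
        linarith
      · exact h
    · exact ⟨1, fun h => absurd h hx⟩
  choose tm htm using hex
  -- uniqueness of the parameter
  have huniq : ∀ x ∈ T, ∀ t1 t2 : ℝ, (0 < t1 ∧ t1 ≤ 1) → (0 < t2 ∧ t2 ≤ 1) →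
      G (xstar + t1 • (x - xstar)) = g → G (xstar + t2 • (x - xstar)) = g → t1 = t2 := by
    intro x hx t1 t2 h1 h2 e1 e2
    by_contra hne
    rcases lt_or_gt_of_ne hne with h | h
    · have := stmt17_smono hD hG hxstar hmin hx.1 (hxne x hx) h1.1 h h2.2
      rw [e1, e2] at this
      exact lt_irrefl _ this
    · have := stmt17_smono hD hG hxstar hmin hx.1 (hxne x hx) h2.1 h h1.2
      rw [e1, e2] at this
      exact lt_irrefl _ this
  -- points of S are fixed
  have htm1 : ∀ y ∈ S, tm y = 1 := by
    intro y hy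
    have hyT : y ∈ T := hST hy
    refine huniq y hyT (tm y) 1 (htm y hyT).1 ⟨one_pos, le_refl 1⟩ (htm y hyT).2 ?_
    simpa using hy.2
  -- continuity of the parameter map on T
  have hcontt : ContinuousOn tm T := by
    intro x0 hx0
    have h0 := htm x0 hx0
    have hx0ne : x0 ≠ xstar := hxne x0 hx0
    refine tendsto_order.2 ⟨?_, ?_⟩
    · intro a ha
      rcases lt_or_ge a 0 with hneg | hpos
      · filter_upwards [self_mem_nhdsWithin] with x hx
        exact hneg.trans (htm x hx).1.1
      · have ha1 : a ≤ 1 := (ha.le.trans h0.1.2)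
        have hfa : G (xstar + a • (x0 - xstar)) < g := by
          rcases hpos.eq_or_lt with h | h
          · rw [← h]
            simpa using hg
          · calc G (xstar + a • (x0 - xstar)) < G (xstar + tm x0 • (x0 - xstar)) :=
                  stmt17_smono hD hG hxstar hmin hx0.1 hx0ne h ha h0.1.2
              _ = g := h0.2
        have hcw : ContinuousWithinAt (fun x => G (xstar + a • (x - xstar))) T x0 := by
          refine (hGcont.comp ?_ ?_) x0 hx0
          · exact Continuous.continuousOn (by continuity)
          · intro x hx
            exact stmt17_mem hD hxstar hx.1 hpos ha1
        have hev := hcw.eventually_lt_const hfa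
        filter_upwards [hev, self_mem_nhdsWithin] with x hxlt hxT
        by_contra hcon
        push_neg at hcon
        have := stmt17_mono hD hGcv hxstar hmin hxT.1 (htm x hxT).1.1.le hcon ha1
        rw [(htm x hxT).2] at this
        linarith
    · intro b hb
      rcases lt_or_ge (tm x0) 1 with ht01 | ht01
      · set s' := min 1 ((tm x0 + b) / 2) with hs'def
        have hs'le1 : s' ≤ 1 := min_le_left _ _
        have hs'gt : tm x0 < s' := lt_min ht01 (by linarith)
        have hs'lb : s' < b := lt_of_le_of_lt (min_le_right _ _) (by linarith)
        have hs'pos : 0 < s' := h0.1.1.trans hs'gt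
        have hfs : g < G (xstar + s' • (x0 - xstar)) := by
          rw [← h0.2]
          exact stmt17_smono hD hG hxstar hmin hx0.1 hx0ne h0.1.1 hs'gt hs'le1
        have hcw : ContinuousWithinAt (fun x => G (xstar + s' • (x - xstar))) T x0 := by
          refine (hGcont.comp ?_ ?_) x0 hx0
          · exact Continuous.continuousOn (by continuity)
          · intro x hx
            exact stmt17_mem hD hxstar hx.1 hs'pos.le hs'le1
        have hev := hcw.eventually_const_lt hfs
        filter_upwards [hev, self_mem_nhdsWithin] with x hxgt hxT
        by_contra hcon
        push_neg at hcon
        have hs'le : s' ≤ tm x := hs'lb.le.trans hcon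
        have := stmt17_mono hD hGcv hxstar hmin hxT.1 hs'pos.le hs'le (htm x hxT).1.2
        rw [(htm x hxT).2] at this
        linarith
      · filter_upwards [self_mem_nhdsWithin] with x hx
        have : tm x ≤ 1 := (htm x hx).1.2
        linarith
  -- the projection map
  set θ : (Fin n → ℝ) → (Fin n → ℝ) := fun x => xstar + tm x • (x - xstar) with hθdef
  have hθS : ∀ x ∈ T, θ x ∈ S := fun x hx =>
    ⟨stmt17_mem hD hxstar hx.1 (htm x hx).1.1.le (htm x hx).1.2, (htm x hx).2⟩
  have hθcont : ContinuousOn θ T := by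
    apply ContinuousOn.add continuousOn_const
    exact hcontt.smul (continuousOn_id.sub continuousOn_const)
  have hθfix : ∀ y ∈ S, θ y = y := by
    intro y hy
    show xstar + tm y • (y - xstar) = y
    rw [htm1 y hy]
    simp
  constructor
  · intro y _
    exact pathComponentIn_mono hST
  · intro x hx
    constructor
    · refine ⟨θ x, hθS x hx, ?_⟩
      show JoinedIn T x (θ x)
      have h0 := htm x hx
      refine ⟨⟨⟨fun u => xstar + ((1 - (u : ℝ)) + (u : ℝ) * tm x) • (x - xstar), ?_⟩, ?_, ?_⟩, ?_⟩
      · apply Continuous.add continuous_const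
        apply Continuous.smul (f := fun u : unitInterval => (1 - (u : ℝ)) + (u : ℝ) * tm x) ?_ continuous_const
        exact (continuous_const.sub continuous_subtype_val).add
          (continuous_subtype_val.mul continuous_const)
      · show xstar + ((1 - ((0 : unitInterval) : ℝ)) + ((0 : unitInterval) : ℝ) * tm x) • (x - xstar) = x
        norm_num
      · show xstar + ((1 - ((1 : unitInterval) : ℝ)) + ((1 : unitInterval) : ℝ) * tm x) • (x - xstar) = θ x
        norm_num
        rfl
      · intro u
        have hu0 : (0 : ℝ) ≤ u := u.2.1
        have hu1 : (u : ℝ) ≤ 1 := u.2.2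
        have hcge : tm x ≤ (1 - (u : ℝ)) + (u : ℝ) * tm x := by nlinarith [h0.1.2]
        have hcle : (1 - (u : ℝ)) + (u : ℝ) * tm x ≤ 1 := by nlinarith [h0.1.2]
        have hc0 : 0 ≤ (1 - (u : ℝ)) + (u : ℝ) * tm x := h0.1.1.le.trans hcge
        refine ⟨stmt17_mem hD hxstar hx.1 hc0 hcle, ?_⟩
        rw [← h0.2]
        exact stmt17_mono hD hGcv hxstar hmin hx.1 h0.1.1.le hcge hcle
    · intro y z hyS hzS hy hz
      have hxy : JoinedIn T x y := hy
      have hxz : JoinedIn T x z := hz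
      obtain ⟨γ, hγ⟩ := hxy.symm.trans hxz
      refine ⟨⟨⟨fun u => θ (γ u), ?_⟩, ?_, ?_⟩, fun u => hθS _ (hγ u)⟩
      · exact hθcont.comp_continuous γ.continuous (fun u => hγ u)
      · show θ (γ 0) = y
        rw [γ.source]
        exact hθfix y hyS
      · show θ (γ 1) = z
        rw [γ.target]
        exact hθfix z hzS
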